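/- A subset D of size k in a finite abelian group G of size n is an (n,k,λ)-difference set if and only if for every character χ of G, |χ(D)|² = k² when χ is principal and |χ(D)|² = k − λ when χ is not principal. -/

import Mathlib

set_option linter.unusedSectionVars false
open Finset

section Aux
variable {G : Type*} [AddCommGroup G] [Fintype G] [DecidableEq G]

private lemma DS_key (D : Finset G) (χ : AddChar G ℂ) :
    ((‖∑ d ∈ D, χ d‖ ^ 2 : ℝ) : ℂ)
      = ∑ g : G, (((D ×ˢ D).filter (fun p => p.1 - p.2 = g)).card : ℂ) * χ g := by
  have h1 : ((‖∑ d ∈ D, χ d‖ ^ 2 : ℝ) : ℂ)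
      = (∑ d ∈ D, χ d) * (starRingEnd ℂ) (∑ d ∈ D, χ d) := by
    rw [Complex.mul_conj, Complex.sq_norm]
  rw [h1, map_sum]
  have h2 : (∑ d ∈ D, χ d) * (∑ d ∈ D, (starRingEnd ℂ) (χ d))
      = ∑ p ∈ D ×ˢ D, χ (p.1 - p.2) := by
    rw [Finset.sum_mul_sum, Finset.sum_product]
    refine Finset.sum_congr rfl fun a _ => Finset.sum_congr rfl fun b _ => ?_
    rw [← AddChar.map_neg_eq_conj, sub_eq_add_neg, AddChar.map_add_eq_mul]
  rw [h2]
  have h3 := Finset.sum_fiberwise_of_maps_to' (s := D ×ˢ D) (t := (univ : Finset G))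
      (g := fun p => p.1 - p.2) (fun p _ => mem_univ _) (fun g => (χ g : ℂ))
  rw [← h3]
  refine Finset.sum_congr rfl fun g _ => ?_
  rw [Finset.sum_const, nsmul_eq_mul]

private lemma DS_card_zero (D : Finset G) :
    ((D ×ˢ D).filter (fun p => p.1 - p.2 = 0)).card = D.card := by
  rw [← Finset.diag_card (s := D)]
  congr 1
  ext p
  simp only [Finset.mem_filter, Finset.mem_product, Finset.mem_diag, sub_eq_zero]
  constructor
  · rintro ⟨⟨h1, _⟩, h3⟩; exact ⟨h1, h3⟩
  · rintro ⟨h1, h2⟩; exact ⟨⟨h1, h2 ▸ h1⟩, h2⟩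

private lemma DS_sum_cards (D : Finset G) :
    ∑ g : G, ((D ×ˢ D).filter (fun p => p.1 - p.2 = g)).card = D.card ^ 2 := by
  have := Finset.sum_card_fiberwise_eq_card_filter (s := D ×ˢ D) (t := (univ : Finset G))
      (fun p => p.1 - p.2)
  simpa [sq, Finset.card_product] using this

private lemma DS_filter_eq (D : Finset G) {g : G} (hg : g ≠ 0) :
    ((D ×ˢ D).filter (fun p => p.1 ≠ p.2 ∧ p.1 - p.2 = g))
      = ((D ×ˢ D).filter (fun p => p.1 - p.2 = g)) := by
  refine Finset.filter_congr fun p _ => ?_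
  constructor
  · exact fun h => h.2
  · intro h
    refine ⟨fun hne => hg ?_, h⟩
    rw [← h, hne, sub_self]

end Aux

open scoped Classical in
/-- A subset `D` of size `k` of a finite abelian group `G` of size `n` is an
`(n,k,λ)`-difference set iff `|χ(D)|² = k²` for the principal character and
`k - λ` for nonprincipal characters. -/
theorem difference_set_iff_character_sums {G : Type*} [AddCommGroup G] [Fintype G]
    [DecidableEq G] (n k lam : ℕ) (hn : Fintype.card G = n)
    (D : Finset G) (hk : D.card = k) :
    (∀ g : G, g ≠ 0 →
        ((D ×ˢ D).filter (fun p => p.1 ≠ p.2 ∧ p.1 - p.2 = g)).card = lam) ↔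
    (∀ χ : AddChar G ℂ,
        ‖∑ d ∈ D, χ d‖ ^ 2 = if χ = 1 then (k : ℝ) ^ 2 else (k : ℝ) - lam) := by
  have hNzero : (((D ×ˢ D).filter (fun p => p.1 - p.2 = 0)).card : ℂ) = (k : ℂ) := by
    rw [DS_card_zero, hk]
  constructor
  · intro h χ
    by_cases hχ : χ = 1
    · simp [hχ, hk, abs_of_nonneg]
    · simp only [hχ, if_false]
      have key := DS_key D χ
      have hsum0 : ∑ g : G, χ g = 0 :=
        AddChar.sum_eq_zero_iff_ne_zero.2 (by exact hχ)
      have hval : ∀ g ∈ (univ : Finset G).erase 0,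
          (((D ×ˢ D).filter (fun p => p.1 - p.2 = g)).card : ℂ) * χ g = (lam : ℂ) * χ g := by
        intro g hg
        have hg0 : g ≠ 0 := (Finset.mem_erase.1 hg).1
        have hc := h g hg0
        rw [DS_filter_eq D hg0] at hc
        rw [hc]
      have hsplit : ∑ g : G, (((D ×ˢ D).filter (fun p => p.1 - p.2 = g)).card : ℂ) * χ g
          = (∑ g ∈ (univ : Finset G).erase 0,
              (((D ×ˢ D).filter (fun p => p.1 - p.2 = g)).card : ℂ) * χ g)
            + (((D ×ˢ D).filter (fun p => p.1 - p.2 = 0)).card : ℂ) * χ 0 :=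
        (Finset.sum_erase_add _ _ (mem_univ 0)).symm
      have hsum_erase : ∑ g ∈ (univ : Finset G).erase 0, χ g = -1 := by
        have h0 : ∑ g ∈ (univ : Finset G).erase 0, χ g + χ 0 = ∑ g : G, χ g :=
          Finset.sum_erase_add _ _ (mem_univ 0)
        rw [hsum0, AddChar.map_zero_eq_one] at h0
        linear_combination h0
      have hfin : ((‖∑ d ∈ D, χ d‖ ^ 2 : ℝ) : ℂ) = (((k : ℝ) - lam : ℝ) : ℂ) := by
        rw [key, hsplit, Finset.sum_congr rfl hval, ← Finset.mul_sum, hsum_erase, hNzero,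
          AddChar.map_zero_eq_one]
        push_cast
        ring
      exact Complex.ofReal_injective hfin
  · intro h g₀ hg₀
    rw [DS_filter_eq D hg₀]
    set N : G → ℕ := fun g => ((D ×ˢ D).filter (fun p => p.1 - p.2 = g)).card with hNdef
    have hC : ∀ χ : AddChar G ℂ,
        ∑ g : G, (N g : ℂ) * χ g = if χ = 1 then ((k : ℂ)) ^ 2 else (k : ℂ) - (lam : ℂ) := by
      intro χ
      have hh := h χ
      have key := DS_key D χ
      rw [hh] at key
      rw [← key]
      split_ifs <;> push_cast <;> ring
    set K : ℂ := (k : ℂ) ^ 2 - (k : ℂ) + (lam : ℂ) with hKdef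
    -- key pointwise identity via Fourier inversion
    have hKey : ∀ g : G, g ≠ 0 → (N g : ℂ) * (n : ℂ) = K := by
      intro g₁ hg₁
      have horth : ∀ g : G, ∑ χ : AddChar G ℂ, χ (g - g₁)
          = if g = g₁ then (n : ℂ) else 0 := by
        intro g
        rw [AddChar.sum_apply_eq_ite, hn]
        simp [sub_eq_zero]
      have hT : ∑ χ : AddChar G ℂ, (∑ g : G, (N g : ℂ) * χ g) * χ (-g₁)
          = (N g₁ : ℂ) * (n : ℂ) := by
        calc ∑ χ : AddChar G ℂ, (∑ g : G, (N g : ℂ) * χ g) * χ (-g₁)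
            = ∑ g : G, (N g : ℂ) * ∑ χ : AddChar G ℂ, χ (g - g₁) := by
              simp_rw [Finset.sum_mul]
              rw [Finset.sum_comm]
              refine Finset.sum_congr rfl fun g _ => ?_
              rw [Finset.mul_sum]
              refine Finset.sum_congr rfl fun χ _ => ?_
              rw [mul_assoc, ← AddChar.map_add_eq_mul, sub_eq_add_neg]
          _ = (N g₁ : ℂ) * (n : ℂ) := by
              rw [Finset.sum_congr rfl (fun g _ => by rw [horth g])]
              simp
      have hsumχ : ∑ χ : AddChar G ℂ, χ (-g₁) = 0 :=
        AddChar.sum_apply_eq_zero_iff_ne_zero.2 (by simpa using hg₁)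
      have hT2 : ∑ χ : AddChar G ℂ, (∑ g : G, (N g : ℂ) * χ g) * χ (-g₁) = K := by
        have e1 : ∀ χ : AddChar G ℂ, (∑ g : G, (N g : ℂ) * χ g) * χ (-g₁)
            = ((k : ℂ) - lam) * χ (-g₁)
              + (if χ = 1 then (K : ℂ) * χ (-g₁) else 0) := by
          intro χ
          rw [hC χ]
          split_ifs with hx
          · rw [hKdef]; ring
          · ring
        rw [Finset.sum_congr rfl fun χ _ => e1 χ, Finset.sum_add_distrib, ← Finset.mul_sum,
          hsumχ, mul_zero, zero_add, Finset.sum_ite_eq' univ (1 : AddChar G ℂ)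
            (fun χ => (K : ℂ) * χ (-g₁))]
        simp
      rw [← hT, hT2]
    -- total count
    have hn1 : 1 ≤ n := hn ▸ Fintype.card_pos
    have hsum_all : (∑ g ∈ (univ : Finset G).erase 0, (N g : ℂ)) = (k : ℂ) ^ 2 - k := by
      have h0 : ∑ g ∈ (univ : Finset G).erase 0, (N g : ℂ) + (N 0 : ℂ)
          = ∑ g : G, (N g : ℂ) := Finset.sum_erase_add _ _ (mem_univ 0)
      have h1 : ∑ g : G, (N g : ℂ) = (k : ℂ) ^ 2 := by
        rw [← Nat.cast_sum]
        rw [DS_sum_cards D, hk]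
        push_cast; ring
      rw [h1] at h0
      have h2 : (N 0 : ℂ) = (k : ℂ) := hNzero
      rw [h2] at h0
      linear_combination h0
    have hcard_erase : ((univ : Finset G).erase 0).card = n - 1 := by
      rw [Finset.card_erase_of_mem (mem_univ 0), Finset.card_univ, hn]
    have e2 : ((k : ℂ) ^ 2 - k) * (n : ℂ) = ((n : ℂ) - 1) * K := by
      calc ((k : ℂ) ^ 2 - k) * (n : ℂ)
          = ∑ g ∈ (univ : Finset G).erase 0, (N g : ℂ) * (n : ℂ) := by
            rw [← Finset.sum_mul, hsum_all]
        _ = ∑ g ∈ (univ : Finset G).erase 0, K := by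
            refine Finset.sum_congr rfl fun g hg => ?_
            exact hKey g (Finset.mem_erase.1 hg).1
        _ = ((n : ℂ) - 1) * K := by
            rw [Finset.sum_const, hcard_erase, nsmul_eq_mul]
            congr 1
            push_cast [Nat.cast_sub hn1]
            ring
    have e1 := hKey g₀ hg₀
    have hnne : (n : ℂ) ≠ 0 := by
      exact_mod_cast Nat.cast_ne_zero.2 (by omega)
    have hfinal : (N g₀ : ℂ) = (lam : ℂ) := by
      apply mul_right_cancel₀ hnne
      rw [hKdef] at e1 e2
      linear_combination e1 + e2
    exact_mod_cast hfinal
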